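/- With b > 1/4, t_c = 1/2 + i√(b - 1/4), and R_λ(t) = Re(t²/2 - (2/3)(t-b)^{3/2} - (2/3) i b^{3/2}) (branch cut on positive real axis), the critical value satisfies R_λ(t_c) = b/2 - 1/12. -/

import Mathlib

open Complex

/-- Branch of the complex square root with argument in `[0, 2π)` (cut along the
positive real axis). -/
noncomputable def sqrtBr (z : ℂ) : ℂ :=
  (Real.sqrt ‖z‖ : ℂ) *
    Complex.exp (Complex.I * ((if 0 ≤ z.arg then z.arg else z.arg + 2 * Real.pi : ℝ) : ℂ) / 2)

/-- The `3/2`-power with the same branch cut. -/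
noncomputable def pow32 (z : ℂ) : ℂ := (sqrtBr z) ^ 3

/-- `F_λ(t) = t²/2 - (2/3)(t-b)^{3/2} - (2/3) i b^{3/2}` and `R_λ = Re F_λ`. -/
noncomputable def Flam (b : ℝ) (t : ℂ) : ℂ :=
  t ^ 2 / 2 - (2 / 3 : ℂ) * pow32 (t - (b : ℂ)) - (2 / 3 : ℂ) * Complex.I * pow32 ((b : ℂ))

lemma sqrtBr_sq (w : ℂ) (h0 : 0 ≤ w.arg) (h1 : w.arg < Real.pi / 2) (hw : w ≠ 0) :
    sqrtBr (w ^ 2) = w := by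
  unfold sqrtBr
  have harg : (w ^ 2).arg = 2 * w.arg := by
    rw [sq, Complex.arg_mul hw hw ⟨by nlinarith [Real.pi_pos], by nlinarith⟩]
    ring
  rw [harg, if_pos (by linarith), norm_pow, Real.sqrt_sq (norm_nonneg w)]
  rw [show Complex.I * ((2 * w.arg : ℝ) : ℂ) / 2 = (w.arg : ℂ) * Complex.I by push_cast; ring]
  exact Complex.norm_mul_exp_arg_mul_I w

lemma sqrtBr_ofReal_nonneg (r : ℝ) (hr : 0 ≤ r) :
    sqrtBr (r : ℂ) = (Real.sqrt r : ℂ) := by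
  unfold sqrtBr
  rw [Complex.arg_ofReal_of_nonneg hr, if_pos le_rfl]
  simp [Complex.norm_of_nonneg hr, abs_of_nonneg hr]

/-- The critical value: `R_λ(t_c) = b/2 - 1/12` at `t_c = 1/2 + i√(b - 1/4)`. -/
theorem critical_value_of_relief (b : ℝ) (hb : b > 1 / 4) :
    (Flam b (1 / 2 + Complex.I * (Real.sqrt (b - 1 / 4) : ℂ))).re = b / 2 - 1 / 12 := by
  set s : ℝ := Real.sqrt (b - 1 / 4) with hs
  have hs2 : s ^ 2 = b - 1 / 4 := Real.sq_sqrt (by linarith)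
  have hspos : 0 < s := Real.sqrt_pos.mpr (by linarith)
  set w : ℂ := 1 / 2 + Complex.I * (s : ℂ) with hw
  have hwre : w.re = 1 / 2 := by simp [hw]
  have hwim : w.im = s := by simp [hw]
  have hwne : w ≠ 0 := by
    intro h
    rw [h] at hwre
    simp at hwre
  have hsq : w ^ 2 = w - (b : ℂ) := by
    rw [hw]
    apply Complex.ext <;>
      simp [Complex.add_re, Complex.add_im, Complex.mul_re, Complex.mul_im, pow_two] <;> nlinarith
  have harg0 : 0 ≤ w.arg := Complex.arg_nonneg_iff.mpr (by rw [hwim]; positivity)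
  have harg1 : w.arg < Real.pi / 2 := by
    have := Complex.abs_arg_lt_pi_div_two_iff.mpr (Or.inl (by rw [hwre]; norm_num))
    exact (abs_lt.mp this).2
  have h1 : pow32 (w - (b : ℂ)) = w ^ 3 := by
    rw [← hsq]; unfold pow32; rw [sqrtBr_sq w harg0 harg1 hwne]
  have h2 : pow32 ((b : ℂ)) = ((Real.sqrt b : ℝ) : ℂ) ^ 3 := by
    unfold pow32; rw [sqrtBr_ofReal_nonneg b (by linarith)]
  rw [Flam, h1, h2, hw]
  simp [Complex.div_re, Complex.mul_re, Complex.mul_im, Complex.add_re, Complex.add_im,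
    Complex.sub_re, Complex.normSq, pow_succ, pow_zero]
  nlinarith [hs2]
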